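/- Let G be a graph on an even number n of vertices. Then every odd-indexed coefficient of the characteristic polynomial of its adjacency matrix is even; consequently, over F_2, φ(x) is a perfect square: φ(x) ≡ (x^{n/2} + c_2 x^{n/2-1} + ... + c_{n-2} x + c_n)^2 (mod 2). -/

import Mathlib

open Matrix Polynomial

lemma charpoly_coeff_odd_eq_zero {n : ℕ} (hn : Even n)
    (B : Matrix (Fin n) (Fin n) (ZMod 2)) (hsym : Bᵀ = B) (hdiag : ∀ i, B i i = 0)
    {k : ℕ} (hk : Odd k) : B.charpoly.coeff k = 0 := by
  classical
  set M := Matrix.charmatrix B with hM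
  have hMsym : ∀ i j, M i j = M j i := by
    intro i j
    by_cases h : i = j
    · subst h; rfl
    · rw [hM, Matrix.charmatrix_apply_ne _ _ _ h, Matrix.charmatrix_apply_ne _ _ _ (Ne.symm h)]
      have hb : B i j = B j i := by conv_lhs => rw [← hsym, Matrix.transpose_apply]
      rw [hb]
  have hdet : B.charpoly = ∑ σ : Equiv.Perm (Fin n), ∏ i, M (σ i) i := by
    rw [Matrix.charpoly, Matrix.det_apply]
    refine Finset.sum_congr rfl fun σ _ => ?_
    rcases Int.units_eq_one_or (Equiv.Perm.sign σ) with h | h <;>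
      simp [h, Units.smul_def, CharTwo.neg_eq, hM]
  have hpair : ∀ σ : Equiv.Perm (Fin n), (∏ i, M (σ⁻¹ i) i) = ∏ i, M (σ i) i := by
    intro σ
    calc (∏ i, M (σ⁻¹ i) i) = ∏ i, M (σ⁻¹ (σ i)) (σ i) :=
          (Equiv.prod_comp σ fun i => M (σ⁻¹ i) i).symm
    _ = ∏ i, M i (σ i) := by simp
    _ = ∏ i, M (σ i) i := Finset.prod_congr rfl fun i _ => hMsym i (σ i)
  have key : ∀ σ : Equiv.Perm (Fin n), σ⁻¹ = σ → (∏ i, M (σ i) i).coeff k = 0 := by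
    intro σ hσ
    have hsplit : (Finset.univ : Finset (Fin n)) = σ.support ∪ σ.supportᶜ := by simp
    have h1 : ∏ i ∈ σ.supportᶜ, M (σ i) i = X ^ (σ.supportᶜ.card) := by
      rw [← Finset.prod_const]
      refine Finset.prod_congr rfl fun i hi => ?_
      have hfix : σ i = i := by simpa [Equiv.Perm.mem_support] using hi
      rw [hfix, hM, Matrix.charmatrix_apply_eq, hdiag, map_zero, sub_zero]
    have h2 : ∏ i ∈ σ.support, M (σ i) i = C (∏ i ∈ σ.support, (-(B (σ i) i))) := by
      rw [map_prod]
      refine Finset.prod_congr rfl fun i hi => ?_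
      have hne : σ i ≠ i := by simpa [Equiv.Perm.mem_support] using hi
      rw [hM, Matrix.charmatrix_apply_ne _ _ _ hne, map_neg]
    have hprod : ∏ i, M (σ i) i
        = C (∏ i ∈ σ.support, (-(B (σ i) i))) * X ^ (σ.supportᶜ.card) := by
      rw [← h1, ← h2, ← Finset.prod_union disjoint_compl_right, ← hsplit]
    rw [hprod, Polynomial.coeff_C_mul, Polynomial.coeff_X_pow]
    have h2d : 2 ∣ σ.support.card :=
      Equiv.Perm.two_dvd_card_support (by rw [pow_two]; nth_rewrite 1 [← hσ]; exact inv_mul_cancel σ)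
    have hcard : σ.supportᶜ.card = n - σ.support.card := by
      rw [Finset.card_compl, Fintype.card_fin]
    have hne : k ≠ σ.supportᶜ.card := by
      obtain ⟨c, hc⟩ := hn
      obtain ⟨d, hd⟩ := h2d
      obtain ⟨e, he⟩ := hk
      have hle : σ.support.card ≤ n := by
        simpa using Finset.card_le_univ σ.support
      omega
    rw [if_neg hne, mul_zero]
  rw [hdet, Polynomial.finset_sum_coeff,
    ← Finset.sum_filter_add_sum_filter_not Finset.univ (fun σ => σ⁻¹ = σ)]
  rw [Finset.sum_eq_zero (fun σ hσ => key σ (Finset.mem_filter.mp hσ).2), zero_add]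
  refine Finset.sum_involution (fun σ _ => σ⁻¹) ?_ ?_ ?_ ?_
  · intro σ hσ
    rw [hpair σ]
    exact CharTwo.add_self_eq_zero _
  · intro σ hσ _
    exact (Finset.mem_filter.mp hσ).2
  · intro σ hσ
    simp only [Finset.mem_filter, Finset.mem_univ, true_and] at hσ ⊢
    rw [inv_inv]
    exact fun h => hσ h.symm
  · intro σ hσ
    exact inv_inv σ

/-- For a graph on an even number `n` of vertices, every odd-indexed coefficient `cᵢ` of the
characteristic polynomial `φ(x) = xⁿ + c₁xⁿ⁻¹ + ⋯ + cₙ` of its adjacency matrix is even, and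
consequently over `F₂`, `φ ≡ (x^{n/2} + c₂x^{n/2-1} + ⋯ + c_{n-2}x + c_n)² (mod 2)`. -/
theorem charpoly_is_square_mod_two_of_even_order {n : ℕ} (hn : Even n) (hpos : 0 < n)
    (G : SimpleGraph (Fin n)) [DecidableRel G.Adj] :
    (∀ i, Odd i → i ≤ n → Even ((G.adjMatrix ℤ).charpoly.coeff (n - i))) ∧
    ((G.adjMatrix ℤ).charpoly.map (Int.castRingHom (ZMod 2)) =
      (∑ j ∈ Finset.range (n / 2 + 1),
        C (((G.adjMatrix ℤ).charpoly.coeff (n - 2 * j) : ZMod 2)) * X ^ (n / 2 - j)) ^ 2) := by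
  classical
  obtain ⟨c, hc⟩ := hn
  set f := Int.castRingHom (ZMod 2) with hf
  set A := G.adjMatrix ℤ with hA
  set q := A.charpoly with hq
  set B := A.map f with hB
  have hBsym : Bᵀ = B := by
    rw [hB, ← Matrix.transpose_map, hA, (SimpleGraph.isSymm_adjMatrix G).eq]
  have hBdiag : ∀ i, B i i = 0 := by
    intro i
    simp [hB, hA, Matrix.map_apply]
  have hBchar : B.charpoly = q.map f := Matrix.charpoly_map A f
  have hzero : ∀ k, Odd k → (q.map f).coeff k = 0 := by
    intro k hk
    rw [← hBchar]
    exact charpoly_coeff_odd_eq_zero ⟨c, hc⟩ B hBsym hBdiag hk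
  have hcast : ∀ k, ((q.coeff k : ℤ) : ZMod 2) = (q.map f).coeff k := by
    intro k; rw [Polynomial.coeff_map]; rfl
  constructor
  · intro i hi hile
    obtain ⟨e, he⟩ := hi
    have hodd : Odd (n - i) := ⟨c - e - 1, by omega⟩
    have := hzero (n - i) hodd
    rw [← hcast] at this
    rw [even_iff_two_dvd]
    have h2 : ((2 : ℕ) : ℤ) ∣ q.coeff (n - i) :=
      (ZMod.intCast_zmod_eq_zero_iff_dvd _ 2).mp this
    exact_mod_cast h2
  · have hdeg : q.natDegree = n := by
      rw [hq, Matrix.charpoly_natDegree_eq_dim, Fintype.card_fin]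
    have hsq : (∑ j ∈ Finset.range (n / 2 + 1),
        C ((q.coeff (n - 2 * j) : ZMod 2)) * X ^ (n / 2 - j)) ^ 2
        = ∑ j ∈ Finset.range (n / 2 + 1),
          C ((q.coeff (n - 2 * j) : ZMod 2)) * X ^ ((n / 2 - j) * 2) := by
      rw [sum_pow_char]
      refine Finset.sum_congr rfl fun j _ => ?_
      rw [mul_pow, ← map_pow, ZMod.pow_card, ← pow_mul]
    rw [hsq]
    ext k
    rw [Polynomial.finset_sum_coeff]
    simp only [Polynomial.coeff_C_mul, Polynomial.coeff_X_pow]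
    rcases Nat.even_or_odd k with hke | hko
    · obtain ⟨d, hd⟩ := hke
      by_cases hkn : k ≤ n
      · rw [Finset.sum_eq_single (n / 2 - k / 2)]
        · rw [if_pos (by omega), mul_one, ← hcast]
          congr 2
          omega
        · intro j hj hne
          rw [if_neg, mul_zero]
          rw [Finset.mem_range] at hj
          omega
        · intro h
          exact absurd (Finset.mem_range.mpr (by omega)) h
      · rw [Polynomial.coeff_map, Polynomial.coeff_eq_zero_of_natDegree_lt (by omega),
          map_zero]
        refine (Finset.sum_eq_zero fun j hj => ?_).symm
        rw [Finset.mem_range] at hj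
        rw [if_neg (by omega), mul_zero]
    · rw [hzero k hko]
      refine (Finset.sum_eq_zero fun j hj => ?_).symm
      obtain ⟨e, he⟩ := hko
      rw [if_neg (by omega), mul_zero]
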